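/- (Peres–Horodecki necessity) If ρ is a separable density matrix on H₁ ⊗ H₂ (finite-dimensional), then for every positive (not necessarily completely positive) linear map α : B(H₁) → B(H₁), the operator (α ⊗ id)(ρ) is positive semidefinite. In particular the partial transpose (τ ⊗ id)(ρ) is positive. -/

import Mathlib

open Matrix ComplexOrder
open scoped Kronecker

variable {k l : ℕ}

/-- A density matrix is separable if it is a convex combination of tensor products of
density matrices. -/
def Separable (ρ : Matrix (Fin k × Fin l) (Fin k × Fin l) ℂ) : Prop :=
  ∃ (n : ℕ) (p : Fin n → ℝ) (σ₁ : Fin n → Matrix (Fin k) (Fin k) ℂ)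
    (σ₂ : Fin n → Matrix (Fin l) (Fin l) ℂ),
    (∀ i, 0 ≤ p i) ∧ (∑ i, p i = 1) ∧
    (∀ i, (σ₁ i).PosSemidef ∧ (σ₁ i).trace = 1) ∧
    (∀ i, (σ₂ i).PosSemidef ∧ (σ₂ i).trace = 1) ∧
    ρ = ∑ i, (p i : ℂ) • (σ₁ i ⊗ₖ σ₂ i)

/-- The amplification `α ⊗ id` of a map on the first tensor factor. -/
def amplFst (α : Matrix (Fin k) (Fin k) ℂ →ₗ[ℂ] Matrix (Fin k) (Fin k) ℂ)
    (ρ : Matrix (Fin k × Fin l) (Fin k × Fin l) ℂ) :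
    Matrix (Fin k × Fin l) (Fin k × Fin l) ℂ :=
  Matrix.of fun p q => α (Matrix.of fun i j => ρ (i, p.2) (j, q.2)) p.1 q.1

/-- The partial transpose: transposition on the first tensor factor. -/
def partialTransposeFst (ρ : Matrix (Fin k × Fin l) (Fin k × Fin l) ℂ) :
    Matrix (Fin k × Fin l) (Fin k × Fin l) ℂ :=
  Matrix.of fun p q => ρ (q.1, p.2) (p.1, q.2)

lemma kron_conjT {m n : Type*} [Fintype m] [Fintype n]
    (A : Matrix m m ℂ) (B : Matrix n n ℂ) : (A ⊗ₖ B)ᴴ = Aᴴ ⊗ₖ Bᴴ := by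
  ext p q
  simp [conjTranspose_apply, kroneckerMap_apply, mul_comm]

lemma psd_kron {m n : Type*} [Fintype m] [Fintype n] [DecidableEq m] [DecidableEq n]
    {A : Matrix m m ℂ} {B : Matrix n n ℂ}
    (hA : A.PosSemidef) (hB : B.PosSemidef) : (A ⊗ₖ B).PosSemidef := by
  exact hA.kronecker hB

lemma psd_smul {m : Type*} [Fintype m] {c : ℝ} (hc : 0 ≤ c)
    {M : Matrix m m ℂ} (hM : M.PosSemidef) : ((c : ℂ) • M).PosSemidef := by
  rw [posSemidef_iff_dotProduct_mulVec] at hM ⊢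
  constructor
  · rw [IsHermitian, conjTranspose_smul, hM.1.eq]
    congr 1
    simp [Complex.ext_iff]
  · intro x
    rw [smul_mulVec, dotProduct_smul, smul_eq_mul]
    exact mul_nonneg (by exact_mod_cast hc) (hM.2 x)

lemma psd_sum {m : Type*} [Fintype m] {n : ℕ} {f : Fin n → Matrix m m ℂ}
    (h : ∀ i, (f i).PosSemidef) : (∑ i, f i).PosSemidef := by
  classical
  exact Finset.sum_induction f _ (fun a b ha hb => ha.add hb) Matrix.PosSemidef.zero
    (fun i _ => h i)

lemma amplFst_eq (α : Matrix (Fin k) (Fin k) ℂ →ₗ[ℂ] Matrix (Fin k) (Fin k) ℂ)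
    {n : ℕ} (c : Fin n → ℂ) (σ₁ : Fin n → Matrix (Fin k) (Fin k) ℂ)
    (σ₂ : Fin n → Matrix (Fin l) (Fin l) ℂ) :
    amplFst α (∑ i, c i • (σ₁ i ⊗ₖ σ₂ i)) = ∑ i, c i • (α (σ₁ i) ⊗ₖ σ₂ i) := by
  ext p q
  have h1 : (Matrix.of fun i j => (∑ n, c n • (σ₁ n ⊗ₖ σ₂ n)) (i, p.2) (j, q.2))
      = ∑ n, (c n * σ₂ n p.2 q.2) • σ₁ n := by
    ext i j
    simp only [Matrix.of_apply, Matrix.sum_apply, Matrix.smul_apply, kroneckerMap_apply,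
      smul_eq_mul]
    exact Finset.sum_congr rfl fun n _ => by ring
  simp only [amplFst, Matrix.of_apply, h1, map_sum, _root_.map_smul]
  simp only [Matrix.sum_apply, Matrix.smul_apply, kroneckerMap_apply, smul_eq_mul]
  exact Finset.sum_congr rfl fun n _ => by ring

/-- The transpose as a linear map. -/
def transposeLM : Matrix (Fin k) (Fin k) ℂ →ₗ[ℂ] Matrix (Fin k) (Fin k) ℂ where
  toFun := Matrix.transpose
  map_add' := Matrix.transpose_add
  map_smul' := Matrix.transpose_smul

lemma partialTransposeFst_eq (ρ : Matrix (Fin k × Fin l) (Fin k × Fin l) ℂ) :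
    partialTransposeFst ρ = amplFst transposeLM ρ := rfl

/-- Peres–Horodecki (necessity): a separable density matrix stays positive under
`α ⊗ id` for every positive map `α`; in particular its partial transpose is
positive. -/
theorem separable_positive_under_positive_maps
    (ρ : Matrix (Fin k × Fin l) (Fin k × Fin l) ℂ) (hsep : Separable ρ) :
    (∀ α : Matrix (Fin k) (Fin k) ℂ →ₗ[ℂ] Matrix (Fin k) (Fin k) ℂ,
      (∀ a : Matrix (Fin k) (Fin k) ℂ, a.PosSemidef → (α a).PosSemidef) →
      (amplFst α ρ).PosSemidef) ∧
    (partialTransposeFst ρ).PosSemidef := by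
  obtain ⟨n, p, σ₁, σ₂, hp, _, h₁, h₂, hρ⟩ := hsep
  have main : ∀ α : Matrix (Fin k) (Fin k) ℂ →ₗ[ℂ] Matrix (Fin k) (Fin k) ℂ,
      (∀ a : Matrix (Fin k) (Fin k) ℂ, a.PosSemidef → (α a).PosSemidef) →
      (amplFst α ρ).PosSemidef := by
    intro α hα
    rw [hρ, amplFst_eq]
    exact psd_sum fun i => psd_smul (hp i) (psd_kron (hα _ (h₁ i).1) (h₂ i).1)
  refine ⟨main, ?_⟩
  rw [partialTransposeFst_eq]
  exact main transposeLM fun a ha => ha.transpose
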